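/- If (U, ≤) is an ordered supertropical monoid, then the underlying supertropical monoid U is a supertropical semiring (i.e., the forced addition is associative and distributive). -/
import Mathlib


universe u v w

class STM (U : Type u) extends CommMonoid U, Zero U where
  zero_mul' : ∀ x : U, 0 * x = 0
  e : U
  e_idem : e * e = e
  ghost_zero : ∀ x : U, e * x = 0 → x = 0
  le : U → U → Prop
  le_refl : ∀ x : U, le x x
  le_trans : ∀ x y z : U, le x y → le y z → le x z
  le_total : ∀ x y : U, le x y ∨ le y x
  le_antisymm : ∀ x y : U, e * x = x → e * y = y → le x y → le y x → x = y
  le_e : ∀ x y : U, le x y ↔ le (e * x) (e * y)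
  mul_le_mul : ∀ x y z : U, le x y → le (x * z) (y * z)
  zero_le : ∀ x : U, le 0 x

namespace STM

variable {U : Type u} [STM U]

/-- `x` is a ghost element, i.e. `x ∈ eU`. -/
def Ghost (x : U) : Prop := e * x = x

/-- strict inequality for the ordering of the ghost ideal -/
def slt (x y : U) : Prop := le x y ∧ ¬ le y x

open scoped Classical in
/-- the forced addition on a supertropical monoid -/
noncomputable def add (x y : U) : U :=
  if slt (e * x) (e * y) then y
  else if slt (e * y) (e * x) then x
  else e * x

/-- the supertropical monoid `U` "is" a (supertropical) semiring: the forced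
addition is associative and distributive. -/
def IsSemiring (U : Type u) [STM U] : Prop :=
  (∀ x y z : U, add (add x y) z = add x (add y z)) ∧
  (∀ x y z : U, add x y * z = add (x * z) (y * z))

end STM

open STM

/-- A transmission between supertropical monoids. -/
structure IsTransmission {U : Type u} {V : Type v} [STM U] [STM V] (α : U → V) : Prop where
  map_zero : α 0 = 0
  map_one : α 1 = 1
  map_mul : ∀ x y : U, α (x * y) = α x * α y
  map_e : α (STM.e : U) = (STM.e : V)
  mono : ∀ x y : U, Ghost x → Ghost y → STM.le x y → STM.le (α x) (α y)


/-- `r` makes the supertropical monoid `U` an ordered supertropical monoid. -/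
structure IsOST {U : Type u} [STM U] (r : U → U → Prop) : Prop where
  refl : ∀ x : U, r x x
  trans : ∀ x y z : U, r x y → r y z → r x z
  antisymm : ∀ x y : U, r x y → r y x → x = y
  total : ∀ x y : U, r x y ∨ r y x
  mul_right : ∀ x y z : U, r x y → r (x * z) (y * z)
  restrict : ∀ x y : U, Ghost x → Ghost y → (r x y ↔ STM.le x y)
  zero_one : r 0 1
  one_e : r 1 (STM.e : U)

namespace STM

variable {U : Type u} [STM U]

lemma ghost_emul (x : U) : Ghost ((e : U) * x) := by
  show (e : U) * (e * x) = e * x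
  rw [← mul_assoc, e_idem]

lemma slt_trans' {a b c : U} (h1 : slt a b) (h2 : slt b c) : slt a c :=
  ⟨STM.le_trans _ _ _ h1.1 h2.1, fun h => h1.2 (STM.le_trans _ _ _ h2.1 h)⟩

lemma trich (a b : U) (ha : Ghost a) (hb : Ghost b) : slt a b ∨ slt b a ∨ a = b := by
  rcases STM.le_total a b with h | h
  · by_cases h2 : STM.le b a
    · exact Or.inr (Or.inr (STM.le_antisymm a b ha hb h h2))
    · exact Or.inl ⟨h, h2⟩
  · by_cases h2 : STM.le a b
    · exact Or.inr (Or.inr (STM.le_antisymm a b ha hb h2 h))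
    · exact Or.inr (Or.inl ⟨h, h2⟩)

lemma add_of_lt {x y : U} (h : slt ((e : U) * x) (e * y)) : add x y = y := by
  unfold add
  split_ifs with h1 h2 <;>
    first
      | rfl
      | exact absurd h1.1 h.2
      | exact absurd h2.1 h.2
      | exact absurd h h1
      | exact absurd h h2

lemma add_of_gt {x y : U} (h : slt ((e : U) * y) (e * x)) : add x y = x := by
  unfold add
  split_ifs with h1 h2 <;>
    first
      | rfl
      | exact absurd h1.1 h.2
      | exact absurd h2.1 h.2
      | exact absurd h h1
      | exact absurd h h2

lemma add_of_eq {x y : U} (h : (e : U) * x = e * y) : add x y = e * x := by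
  unfold add
  split_ifs with h1 h2 <;>
    first
      | rfl
      | (rw [h] at h1; exact absurd h1.1 h1.2)
      | (rw [h] at h2; exact absurd h2.1 h2.2)

lemma key {r : U → U → Prop} (hr : IsOST r) {x y z : U}
    (h : slt ((e : U) * x) (e * y)) (heq : (e : U) * (x * z) = e * (y * z)) :
    y * z = (e : U) * (y * z) := by
  have hxy : r ((e : U) * x) y := by
    rcases hr.total ((e : U) * x) y with h1 | h1
    · exact h1
    · exfalso
      have h2 := hr.mul_right y ((e : U) * x) e h1
      rw [mul_comm y (e : U), mul_comm ((e : U) * x) (e : U), ← mul_assoc, e_idem] at h2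
      exact h.2 ((hr.restrict _ _ (ghost_emul y) (ghost_emul x)).mp h2)
  have h4 : r ((e : U) * (y * z)) (y * z) := by
    have h5 := hr.mul_right ((e : U) * x) y z hxy
    rw [mul_assoc, heq] at h5
    exact h5
  have h6 : r (y * z) ((e : U) * (y * z)) := by
    have h7 := hr.mul_right 1 (e : U) (y * z) hr.one_e
    rwa [one_mul] at h7
  exact hr.antisymm _ _ h6 h4

end STM

/-- The underlying supertropical monoid of an ordered supertropical monoid is a
supertropical semiring. -/
theorem ost_is_semiring {U : Type u} [STM U] (r : U → U → Prop) (hr : IsOST r) :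
    IsSemiring U := by
  constructor
  · -- associativity (holds in any supertropical monoid)
    intro x y z
    rcases trich ((e : U) * x) (e * y) (ghost_emul x) (ghost_emul y) with hxy | hxy | hxy <;>
      rcases trich ((e : U) * y) (e * z) (ghost_emul y) (ghost_emul z) with hyz | hyz | hyz
    · rw [add_of_lt hxy, add_of_lt hyz, add_of_lt (slt_trans' hxy hyz)]
    · rw [add_of_lt hxy, add_of_gt hyz, add_of_lt hxy]
    · rw [add_of_lt hxy, add_of_eq hyz]
      have h' : slt ((e : U) * x) (e * ((e : U) * y)) := by
        rw [ghost_emul y]; exact hxy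
      rw [add_of_lt h']
    · rw [add_of_gt hxy, add_of_lt hyz]
    · rw [add_of_gt hxy, add_of_gt hyz, add_of_gt hxy, add_of_gt (slt_trans' hyz hxy)]
    · rw [add_of_gt hxy, add_of_eq hyz]
      have h1 : slt ((e : U) * z) (e * x) := by rw [← hyz]; exact hxy
      rw [add_of_gt h1]
      have h2 : slt ((e : U) * ((e : U) * y)) (e * x) := by
        rw [ghost_emul y]; exact hxy
      rw [add_of_gt h2]
    · rw [add_of_eq hxy, add_of_lt hyz]
      have h1 : slt ((e : U) * ((e : U) * x)) (e * z) := by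
        rw [ghost_emul x, hxy]; exact hyz
      rw [add_of_lt h1]
      have h2 : slt ((e : U) * x) (e * z) := by rw [hxy]; exact hyz
      rw [add_of_lt h2]
    · rw [add_of_eq hxy, add_of_gt hyz]
      have h1 : slt ((e : U) * z) (e * ((e : U) * x)) := by
        rw [ghost_emul x, hxy]; exact hyz
      rw [add_of_gt h1, add_of_eq hxy]
    · rw [add_of_eq hxy, add_of_eq hyz]
      have h1 : (e : U) * ((e : U) * x) = e * z := by rw [ghost_emul x, hxy, hyz]
      rw [add_of_eq h1, ghost_emul x]
      have h2 : (e : U) * x = e * ((e : U) * y) := by rw [ghost_emul y, hxy]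
      rw [add_of_eq h2]
  · -- distributivity
    intro x y z
    rcases trich ((e : U) * x) (e * y) (ghost_emul x) (ghost_emul y) with hxy | hxy | hxy
    · rw [add_of_lt hxy]
      have hle : STM.le ((e : U) * (x * z)) (e * (y * z)) := by
        have := STM.mul_le_mul ((e : U) * x) (e * y) z hxy.1
        rwa [mul_assoc, mul_assoc] at this
      rcases trich ((e : U) * (x * z)) (e * (y * z)) (ghost_emul _) (ghost_emul _)
        with h | h | h
      · rw [add_of_lt h]
      · exact absurd hle h.2
      · rw [add_of_eq h, h]
        exact key hr hxy h
    · rw [add_of_gt hxy]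
      have hle : STM.le ((e : U) * (y * z)) (e * (x * z)) := by
        have := STM.mul_le_mul ((e : U) * y) (e * x) z hxy.1
        rwa [mul_assoc, mul_assoc] at this
      rcases trich ((e : U) * (x * z)) (e * (y * z)) (ghost_emul _) (ghost_emul _)
        with h | h | h
      · exact absurd hle h.2
      · rw [add_of_gt h]
      · rw [add_of_eq h]
        exact key hr hxy h.symm
    · rw [add_of_eq hxy]
      have h : (e : U) * (x * z) = e * (y * z) := by
        rw [← mul_assoc, ← mul_assoc, hxy]
      rw [add_of_eq h, mul_assoc]
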